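/- Let A be a CM-order and let WPic(A) be the quotient of the group of pairs (I,w), where I is an invertible fractional A-ideal and w ∈ A_ℚ is totally positive (ψ(w) ∈ ℝ_{>0} for all ψ : A_ℚ → ℂ) with I·Ī = Aw, by the subgroup {(Av, v·v̄) : v ∈ A_ℚ^×}. Let Cl⁻(A) be the group of classes of invertible fractional A-ideals I with I·Ī principal, modulo principal ideals. Then the natural homomorphism h : WPic(A) → Cl⁻(A), [(I,w)] ↦ [I], has kernel and cokernel both annihilated by 2. -/

import Mathlib

set_option maxHeartbeats 1000000
open scoped TensorProduct Pointwise
attribute [local instance] Algebra.TensorProduct.rightAlgebra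

theorem denom {A : Type*} [CommRing A] (x : A ⊗[ℤ] ℚ) :
    ∃ (n : ℤ) (a : A), n ≠ 0 ∧ n • x = algebraMap A (A ⊗[ℤ] ℚ) a := by
  induction x using TensorProduct.induction_on with
  | zero => exact ⟨1, 0, one_ne_zero, by simp⟩
  | tmul a q =>
      refine ⟨q.den, q.num • a, by exact_mod_cast q.den_nz, ?_⟩
      have h1 : ((q.den : ℤ) • q : ℚ) = (q.num : ℤ) • (1:ℚ) := by
        rw [zsmul_eq_mul, zsmul_eq_mul, mul_one]
        push_cast
        rw [mul_comm, Rat.mul_den_eq_num]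
      calc (q.den:ℤ) • (a ⊗ₜ[ℤ] q) = a ⊗ₜ ((q.den:ℤ) • q) := (TensorProduct.tmul_smul _ _ _).symm
        _ = a ⊗ₜ ((q.num:ℤ) • (1:ℚ)) := by rw [h1]
        _ = (q.num:ℤ) • (a ⊗ₜ (1:ℚ)) := TensorProduct.tmul_smul _ _ _
        _ = ((q.num:ℤ) • a) ⊗ₜ (1:ℚ) := TensorProduct.smul_tmul' _ _ _
  | add x y hx hy =>
      obtain ⟨n, a, hn, ha⟩ := hx
      obtain ⟨m, b, hm, hb⟩ := hy
      refine ⟨n * m, m • a + n • b, mul_ne_zero hn hm, ?_⟩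
      rw [smul_add, mul_smul n m y, hb, mul_comm n m, mul_smul m n x, ha, map_add,
        map_zsmul, map_zsmul]

theorem smul_cancel {A : Type*} [CommRing A] {n : ℤ} (hn : n ≠ 0) {x y : A ⊗[ℤ] ℚ}
    (h : n • x = n • y) : x = y := by
  have : Module.IsTorsionFree ℚ (A ⊗[ℤ] ℚ) := DivisionSemiring.to_moduleIsTorsionFree
  rw [← Int.cast_smul_eq_zsmul ℚ n x, ← Int.cast_smul_eq_zsmul ℚ n y] at h
  exact smul_right_injective _ (Int.cast_ne_zero.mpr hn) h

theorem algMap_inj {A : Type*} [CommRing A] [Module.Free ℤ A] :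
    Function.Injective (algebraMap A (A ⊗[ℤ] ℚ)) := by
  have hf : Function.Injective ⇑(LinearMap.lTensor A (Algebra.linearMap ℤ ℚ)) :=
    Module.Flat.lTensor_preserves_injective_linearMap _ fun a b h => by
      simpa using h
  intro a b hab
  have h1 : (LinearMap.lTensor A (Algebra.linearMap ℤ ℚ)) (a ⊗ₜ (1:ℤ)) =
      (LinearMap.lTensor A (Algebra.linearMap ℤ ℚ)) (b ⊗ₜ (1:ℤ)) := by
    simpa [LinearMap.lTensor_tmul] using hab
  simpa using congrArg (TensorProduct.rid ℤ A) (hf h1)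

theorem finQ (A : Type*) [CommRing A] [Module.Finite ℤ A] :
    Module.Finite ℚ (A ⊗[ℤ] ℚ) := by
  classical
  obtain ⟨s, hs⟩ := (Module.finite_def.mp ‹Module.Finite ℤ A›)
  refine ⟨⟨s.image (algebraMap A (A ⊗[ℤ] ℚ)), ?_⟩⟩
  rw [eq_top_iff]
  intro x _
  obtain ⟨n, a, hn, ha⟩ := denom x
  have h1 : algebraMap A (A ⊗[ℤ] ℚ) a ∈
      Submodule.span ℚ ((s.image (algebraMap A (A ⊗[ℤ] ℚ)) : Finset (A ⊗[ℤ] ℚ)) : Set (A ⊗[ℤ] ℚ)) := by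
    have h2 : a ∈ Submodule.span ℤ (s : Set A) := hs ▸ Submodule.mem_top
    have h4 : algebraMap A (A ⊗[ℤ] ℚ) a ∈ Submodule.map
        ((Algebra.linearMap A (A ⊗[ℤ] ℚ)).restrictScalars ℤ) (Submodule.span ℤ (s : Set A)) :=
      Submodule.mem_map_of_mem h2
    rw [Submodule.map_span] at h4
    have h5 : Submodule.span ℤ (((Algebra.linearMap A (A ⊗[ℤ] ℚ)).restrictScalars ℤ) '' s) ≤
        (Submodule.span ℚ ((s.image (algebraMap A (A ⊗[ℤ] ℚ)) : Finset (A ⊗[ℤ] ℚ)) : Set (A ⊗[ℤ] ℚ))).restrictScalars ℤ := by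
      rw [Submodule.span_le]
      intro z hz
      obtain ⟨b, hb, rfl⟩ := hz
      exact Submodule.subset_span (by simpa using ⟨b, hb, rfl⟩)
    exact h5 h4
  have hx2 : x = (n : ℚ)⁻¹ • algebraMap A (A ⊗[ℤ] ℚ) a := by
    rw [← ha, ← Int.cast_smul_eq_zsmul ℚ n x, smul_smul,
      inv_mul_cancel₀ (by exact_mod_cast hn : (n:ℚ) ≠ 0), one_smul]
  rw [hx2]
  exact Submodule.smul_mem _ _ h1

theorem sep {A : Type*} [CommRing A] [IsReduced A] [Module.Free ℤ A] [Module.Finite ℤ A]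
    (x : A ⊗[ℤ] ℚ) (hx : ∀ ψ : (A ⊗[ℤ] ℚ) →+* ℂ, ψ x = 0) : x = 0 := by
  haveI : Module.Finite ℚ (A ⊗[ℤ] ℚ) := finQ A
  haveI : IsReduced (A ⊗[ℤ] ℚ) := by
    constructor
    intro y ⟨k, hk⟩
    obtain ⟨n, a, hn, ha⟩ := denom y
    have h1 : algebraMap A (A ⊗[ℤ] ℚ) (a ^ k) = 0 := by
      rw [map_pow, ← ha, smul_pow, hk, smul_zero]
    have h2 : a ^ k = 0 := algMap_inj (by simpa using h1)
    have h3 : a = 0 := IsReduced.eq_zero a ⟨k, h2⟩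
    exact smul_cancel hn (by rw [ha, h3, map_zero, smul_zero])
  haveI : IsArtinianRing (A ⊗[ℤ] ℚ) := isArtinian_of_tower ℚ inferInstance
  by_contra hx0
  have hnil : ¬ IsNilpotent x := fun h => hx0 (IsReduced.eq_zero x h)
  rw [nilpotent_iff_mem_prime] at hnil
  push_neg at hnil
  obtain ⟨p, hp, hxp⟩ := hnil
  haveI : p.IsMaximal := (IsArtinianRing.isPrime_iff_isMaximal p).mp hp
  letI : Field ((A ⊗[ℤ] ℚ) ⧸ p) := Ideal.Quotient.field p
  haveI : Module.Finite ℚ ((A ⊗[ℤ] ℚ) ⧸ p) :=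
    Module.Finite.of_surjective (Ideal.Quotient.mkₐ ℚ p).toLinearMap
      (Ideal.Quotient.mk_surjective)
  haveI : Algebra.IsAlgebraic ℚ ((A ⊗[ℤ] ℚ) ⧸ p) := Algebra.IsAlgebraic.of_finite ℚ _
  haveI : Module.IsTorsionFree ℚ ((A ⊗[ℤ] ℚ) ⧸ p) :=
    DivisionSemiring.to_moduleIsTorsionFree
  let φ : ((A ⊗[ℤ] ℚ) ⧸ p) →ₐ[ℚ] ℂ := IsAlgClosed.lift
  have h0 := hx (φ.toRingHom.comp (Ideal.Quotient.mk p))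
  rw [RingHom.comp_apply] at h0
  have hker : φ ((Ideal.Quotient.mk p) x) = φ 0 := by rw [map_zero]; exact h0
  have hmk : (Ideal.Quotient.mk p) x = 0 := RingHom.injective (φ.toRingHom) hker
  exact hxp (Ideal.Quotient.eq_zero_iff_mem.mp hmk)


section Sigma
variable {A : Type*} [CommRing A] (σ : A ≃+* A)
  (σQ : (A ⊗[ℤ] ℚ) ≃+* (A ⊗[ℤ] ℚ))
  (hσQ : ∀ a : A, σQ (algebraMap A (A ⊗[ℤ] ℚ) a) = algebraMap A (A ⊗[ℤ] ℚ) (σ a))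
  (hσ : ∀ (ψ : A →+* ℂ) (x : A), ψ (σ x) = starRingEnd ℂ (ψ x))

/-- conjugation as a `σ`-semilinear map -/
def conjSL : (A ⊗[ℤ] ℚ) →ₛₗ[(σ : A →+* A)] (A ⊗[ℤ] ℚ) where
  toFun := σQ
  map_add' := map_add σQ
  map_smul' a x := by
    show σQ (a • x) = σ a • σQ x
    rw [Algebra.smul_def a x, Algebra.smul_def (σ a) (σQ x), map_mul, hσQ]

include hσQ hσ in
theorem psi_conj (ψ : (A ⊗[ℤ] ℚ) →+* ℂ) (x : A ⊗[ℤ] ℚ) :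
    ψ (σQ x) = starRingEnd ℂ (ψ x) := by
  obtain ⟨n, a, hn, ha⟩ := denom x
  have key : n • ψ (σQ x) = n • starRingEnd ℂ (ψ x) := by
    have h1 : ψ (σQ (n • x)) = starRingEnd ℂ (ψ (n • x)) := by
      rw [ha, hσQ]
      exact hσ (ψ.comp (algebraMap A (A ⊗[ℤ] ℚ))) a
    rw [map_zsmul, map_zsmul, map_zsmul, map_zsmul] at h1
    exact h1
  exact smul_right_injective ℂ hn key
end Sigma

section Sigma2
variable {A : Type*} [CommRing A] [IsReduced A] [Module.Free ℤ A] [Module.Finite ℤ A]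
  (σ : A ≃+* A) (σQ : (A ⊗[ℤ] ℚ) ≃+* (A ⊗[ℤ] ℚ))
  (hσQ : ∀ a : A, σQ (algebraMap A (A ⊗[ℤ] ℚ) a) = algebraMap A (A ⊗[ℤ] ℚ) (σ a))
  (hσ : ∀ (ψ : A →+* ℂ) (x : A), ψ (σ x) = starRingEnd ℂ (ψ x))

include hσQ hσ in
theorem sigma2 (x : A ⊗[ℤ] ℚ) : σQ (σQ x) = x := by
  refine sub_eq_zero.mp (sep _ fun ψ => ?_)
  rw [map_sub, psi_conj σ σQ hσQ hσ, psi_conj σ σQ hσQ hσ, Complex.conj_conj, sub_self]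

include hσQ hσ in
theorem wfix (w : A ⊗[ℤ] ℚ) (hw : ∀ ψ : (A ⊗[ℤ] ℚ) →+* ℂ, (ψ w).im = 0) : σQ w = w := by
  refine sub_eq_zero.mp (sep _ fun ψ => ?_)
  rw [map_sub, psi_conj σ σQ hσQ hσ, Complex.conj_eq_iff_im.mpr (hw ψ), sub_self]
end Sigma2

section Subm
variable {A : Type*} [CommRing A] (σ : A ≃+* A)
  (σQ : (A ⊗[ℤ] ℚ) ≃+* (A ⊗[ℤ] ℚ))
  (hσQ : ∀ a : A, σQ (algebraMap A (A ⊗[ℤ] ℚ) a) = algebraMap A (A ⊗[ℤ] ℚ) (σ a))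

theorem spanConj (I : Submodule A (A ⊗[ℤ] ℚ)) :
    Submodule.span A (⇑σQ '' (I : Set (A ⊗[ℤ] ℚ))) = Submodule.map (conjSL σ σQ hσQ) I := by
  haveI : RingHomSurjective ((σ : A →+* A)) := ⟨σ.surjective⟩
  symm
  calc Submodule.map (conjSL σ σQ hσQ) I
      = Submodule.map (conjSL σ σQ hσQ) (Submodule.span A (I : Set (A ⊗[ℤ] ℚ))) := by
        rw [Submodule.span_eq]
    _ = Submodule.span A (⇑(conjSL σ σQ hσQ) '' (I : Set (A ⊗[ℤ] ℚ))) :=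
        Submodule.map_span _ _
    _ = Submodule.span A (⇑σQ '' (I : Set (A ⊗[ℤ] ℚ))) := rfl

theorem mapMul (I J : Submodule A (A ⊗[ℤ] ℚ)) :
    Submodule.map (conjSL σ σQ hσQ) (I * J) =
      Submodule.map (conjSL σ σQ hσQ) I * Submodule.map (conjSL σ σQ hσQ) J := by
  haveI : RingHomSurjective ((σ : A →+* A)) := ⟨σ.surjective⟩
  rw [Submodule.mul_eq_span_mul_set, Submodule.map_span]
  have him : ⇑(conjSL σ σQ hσQ) '' ((I : Set (A ⊗[ℤ] ℚ)) * (J : Set (A ⊗[ℤ] ℚ))) =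
      ⇑σQ '' (I : Set (A ⊗[ℤ] ℚ)) * ⇑σQ '' (J : Set (A ⊗[ℤ] ℚ)) := Set.image_mul σQ
  rw [him, ← Submodule.span_mul_span, spanConj, spanConj]

theorem mapSpanSingleton (t : A ⊗[ℤ] ℚ) :
    Submodule.map (conjSL σ σQ hσQ) (Submodule.span A {t}) = Submodule.span A {σQ t} := by
  haveI : RingHomSurjective ((σ : A →+* A)) := ⟨σ.surjective⟩
  rw [Submodule.map_span, Set.image_singleton]; rfl
end Subm

section Subm2
variable {A : Type*} [CommRing A] [IsReduced A] [Module.Free ℤ A] [Module.Finite ℤ A]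
  (σ : A ≃+* A) (σQ : (A ⊗[ℤ] ℚ) ≃+* (A ⊗[ℤ] ℚ))
  (hσQ : ∀ a : A, σQ (algebraMap A (A ⊗[ℤ] ℚ) a) = algebraMap A (A ⊗[ℤ] ℚ) (σ a))
  (hσ : ∀ (ψ : A →+* ℂ) (x : A), ψ (σ x) = starRingEnd ℂ (ψ x))

include hσ in
theorem mapMap (I : Submodule A (A ⊗[ℤ] ℚ)) :
    Submodule.map (conjSL σ σQ hσQ) (Submodule.map (conjSL σ σQ hσQ) I) = I := by
  haveI : RingHomSurjective ((σ : A →+* A)) := ⟨σ.surjective⟩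
  ext x
  constructor
  · rintro ⟨y, ⟨z, hz, rfl⟩, rfl⟩
    have : (conjSL σ σQ hσQ) ((conjSL σ σQ hσQ) z) = z := sigma2 σ σQ hσQ hσ z
    rw [this]; exact hz
  · intro hx
    exact ⟨σQ x, ⟨x, hx, rfl⟩, sigma2 σ σQ hσQ hσ x⟩
end Subm2

theorem spanUnitMul {A : Type*} [CommRing A] (a b : A) (x : A ⊗[ℤ] ℚ)
    (hab : algebraMap A (A ⊗[ℤ] ℚ) a * algebraMap A (A ⊗[ℤ] ℚ) b = 1) :
    Submodule.span A {algebraMap A (A ⊗[ℤ] ℚ) a * x} = Submodule.span A {x} := by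
  apply le_antisymm
  · rw [Submodule.span_le, Set.singleton_subset_iff]
    rw [← Algebra.smul_def]
    exact Submodule.smul_mem _ _ (Submodule.mem_span_singleton_self x)
  · rw [Submodule.span_le, Set.singleton_subset_iff]
    refine Submodule.mem_span_singleton.mpr ⟨b, ?_⟩
    rw [Algebra.smul_def b (algebraMap A (A ⊗[ℤ] ℚ) a * x)]
    rw [← mul_assoc, mul_comm (algebraMap A (A ⊗[ℤ] ℚ) b), hab, one_mul]

/-- The natural homomorphism `h : WPic(A) → Cl⁻(A)`, `[(I,w)] ↦ [I]`, has kernel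
and cokernel annihilated by 2, stated elementwise.  Here `A_ℚ = A ⊗[ℤ] ℚ`, `σQ`
is the ℚ-linear extension of the involution `σ`, the conjugate ideal `Ī` is
`span A (σQ '' I)`, and `w` totally positive means `ψ w ∈ ℝ_{>0}` for every ring
homomorphism `ψ : A_ℚ → ℂ`.
Kernel: if `(I,w)` is a WPic pair (with `I` an invertible fractional ideal,
`w` totally positive, `I·Ī = Aw`) and `I = Av` is principal (v a unit), then
`(I², w²)` lies in the trivial subgroup `{(Au, u·σQ u)}`.
Cokernel: if `I` is an invertible fractional ideal with `I·Ī = Av` principal,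
then the square `[I]²` is in the image of `h`, i.e. there is a totally positive
`w` with `I²·(I²)̄ = Aw`. -/
theorem stmt19 (A : Type*) [CommRing A] [IsReduced A]
    [Module.Free ℤ A] [Module.Finite ℤ A]
    (σ : A ≃+* A)
    (hσ : ∀ (ψ : A →+* ℂ) (x : A), ψ (σ x) = starRingEnd ℂ (ψ x))
    (σQ : (A ⊗[ℤ] ℚ) ≃+* (A ⊗[ℤ] ℚ))
    (hσQ : ∀ a : A, σQ (algebraMap A (A ⊗[ℤ] ℚ) a) = algebraMap A (A ⊗[ℤ] ℚ) (σ a)) :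
    (∀ (I : Submodule A (A ⊗[ℤ] ℚ)) (w : A ⊗[ℤ] ℚ) (v : (A ⊗[ℤ] ℚ)ˣ),
      I.FG → (∀ x : A ⊗[ℤ] ℚ, ∃ n : ℤ, n ≠ 0 ∧ n • x ∈ I) →
      (∃ J : Submodule A (A ⊗[ℤ] ℚ), I * J = 1) →
      (∀ ψ : (A ⊗[ℤ] ℚ) →+* ℂ, (ψ w).im = 0 ∧ 0 < (ψ w).re) →
      I * Submodule.span A (⇑σQ '' (I : Set (A ⊗[ℤ] ℚ))) = Submodule.span A {w} →
      I = Submodule.span A {(v : A ⊗[ℤ] ℚ)} →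
      ∃ u : (A ⊗[ℤ] ℚ)ˣ,
        I * I = Submodule.span A {(u : A ⊗[ℤ] ℚ)} ∧ w * w = (u : A ⊗[ℤ] ℚ) * σQ u) ∧
    (∀ (I : Submodule A (A ⊗[ℤ] ℚ)) (v : (A ⊗[ℤ] ℚ)ˣ),
      I.FG → (∀ x : A ⊗[ℤ] ℚ, ∃ n : ℤ, n ≠ 0 ∧ n • x ∈ I) →
      (∃ J : Submodule A (A ⊗[ℤ] ℚ), I * J = 1) →
      I * Submodule.span A (⇑σQ '' (I : Set (A ⊗[ℤ] ℚ))) =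
        Submodule.span A {(v : A ⊗[ℤ] ℚ)} →
      ∃ w : A ⊗[ℤ] ℚ,
        (∀ ψ : (A ⊗[ℤ] ℚ) →+* ℂ, (ψ w).im = 0 ∧ 0 < (ψ w).re) ∧
        (I * I) * Submodule.span A
            (⇑σQ '' ((I * I : Submodule A (A ⊗[ℤ] ℚ)) : Set (A ⊗[ℤ] ℚ))) =
          Submodule.span A {w}) := by
  have alg := algebraMap A (A ⊗[ℤ] ℚ)
  constructor
  · -- Part 1: kernel
    intro I w v _ _ _ htp hIcon hIv
    have hσv_inv : σQ ↑v * σQ ↑v⁻¹ = 1 := by rw [← map_mul, Units.mul_inv, map_one]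
    have hIbar : Submodule.span A (⇑σQ '' (I : Set (A ⊗[ℤ] ℚ))) =
        Submodule.span A {σQ ↑v} := by
      rw [hIv, spanConj σ σQ hσQ, mapSpanSingleton]
    have hspan : Submodule.span A {w} =
        Submodule.span A {(↑v : A ⊗[ℤ] ℚ) * σQ ↑v} := by
      rw [← hIcon, hIbar, hIv, Submodule.span_mul_span, Set.singleton_mul_singleton]
    set t : A ⊗[ℤ] ℚ := ↑v * σQ ↑v with ht
    obtain ⟨a, ha⟩ := Submodule.mem_span_singleton.mp
      (hspan ▸ Submodule.mem_span_singleton_self w)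
    obtain ⟨b, hb⟩ := Submodule.mem_span_singleton.mp
      (hspan ▸ Submodule.mem_span_singleton_self t)
    have haw : algebraMap A (A ⊗[ℤ] ℚ) a * t = w := by
      rw [← Algebra.smul_def a t]; exact ha
    have hbt : algebraMap A (A ⊗[ℤ] ℚ) b * w = t := by
      rw [← Algebra.smul_def b w]; exact hb
    have ht_unit : IsUnit t := by
      refine IsUnit.of_mul_eq_one (a := t) (↑v⁻¹ * σQ ↑v⁻¹) ?_
      calc t * (↑v⁻¹ * σQ ↑v⁻¹)
          = (↑v * ↑v⁻¹) * (σQ ↑v * σQ ↑v⁻¹) := by rw [ht]; ring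
        _ = 1 := by rw [Units.mul_inv, hσv_inv, one_mul]
    have hab1 : algebraMap A (A ⊗[ℤ] ℚ) a * algebraMap A (A ⊗[ℤ] ℚ) b = 1 := by
      have h := ht_unit.mul_left_cancel (show t * (algebraMap A (A ⊗[ℤ] ℚ) b *
          algebraMap A (A ⊗[ℤ] ℚ) a) = t * 1 by
        rw [mul_one]
        calc t * (algebraMap A (A ⊗[ℤ] ℚ) b * algebraMap A (A ⊗[ℤ] ℚ) a)
            = algebraMap A (A ⊗[ℤ] ℚ) b * (algebraMap A (A ⊗[ℤ] ℚ) a * t) := by ring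
          _ = algebraMap A (A ⊗[ℤ] ℚ) b * w := by rw [haw]
          _ = t := hbt)
      rw [mul_comm]; exact h
    have hwfixed : σQ w = w := wfix σ σQ hσQ hσ w (fun ψ => (htp ψ).1)
    have htfix : σQ t = t := by
      rw [ht, map_mul, sigma2 σ σQ hσQ hσ, mul_comm]
    have hsa : algebraMap A (A ⊗[ℤ] ℚ) (σ a) = algebraMap A (A ⊗[ℤ] ℚ) a := by
      have h1 := congrArg σQ haw
      rw [map_mul, hσQ, htfix, hwfixed, ← haw] at h1
      exact ht_unit.mul_right_cancel h1
    have huu : IsUnit (algebraMap A (A ⊗[ℤ] ℚ) a * (↑v * ↑v)) := by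
      refine IsUnit.of_mul_eq_one (algebraMap A (A ⊗[ℤ] ℚ) b * (↑v⁻¹ * ↑v⁻¹)) ?_
      calc (algebraMap A (A ⊗[ℤ] ℚ) a * (↑v * ↑v)) *
            (algebraMap A (A ⊗[ℤ] ℚ) b * (↑v⁻¹ * ↑v⁻¹))
          = (algebraMap A (A ⊗[ℤ] ℚ) a * algebraMap A (A ⊗[ℤ] ℚ) b) *
            ((↑v * ↑v⁻¹) * (↑v * ↑v⁻¹)) := by ring
        _ = 1 := by rw [hab1, one_mul, Units.mul_inv, one_mul]
    refine ⟨huu.unit, ?_, ?_⟩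
    · rw [IsUnit.unit_spec, hIv, Submodule.span_mul_span, Set.singleton_mul_singleton,
        spanUnitMul a b _ hab1]
    · rw [IsUnit.unit_spec]
      have hσu : σQ (algebraMap A (A ⊗[ℤ] ℚ) a * (↑v * ↑v)) =
          algebraMap A (A ⊗[ℤ] ℚ) a * (σQ ↑v * σQ ↑v) := by
        rw [map_mul, map_mul, hσQ, hsa]
      rw [hσu, ← haw, ht]
      ring
  · -- Part 2: cokernel
    intro I v _ _ _ hIcon
    rw [spanConj σ σQ hσQ I] at hIcon
    have hconjEq : Submodule.map (conjSL σ σQ hσQ) I * I =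
        Submodule.span A {σQ ↑v} := by
      have h := congrArg (Submodule.map (conjSL σ σQ hσQ)) hIcon
      rw [mapMul σ σQ hσQ, mapMap σ σQ hσQ hσ, mapSpanSingleton] at h
      exact h
    have hσvspan : Submodule.span A {σQ ↑v} =
        Submodule.span A {(↑v : A ⊗[ℤ] ℚ)} := by
      rw [← hconjEq, mul_comm (Submodule.map (conjSL σ σQ hσQ) I) I, hIcon]
    refine ⟨↑v * σQ ↑v, ?_, ?_⟩
    · intro ψ
      have hψv : ψ ↑v ≠ 0 := by
        intro h0
        have h1 : (1 : ℂ) = 0 := by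
          calc (1:ℂ) = ψ (↑v * ↑v⁻¹) := by rw [Units.mul_inv, map_one]
            _ = ψ ↑v * ψ ↑v⁻¹ := map_mul _ _ _
            _ = 0 := by rw [h0, zero_mul]
        exact one_ne_zero h1
      have h2 : ψ (↑v * σQ ↑v) = (Complex.normSq (ψ ↑v) : ℝ) := by
        rw [map_mul, psi_conj σ σQ hσQ hσ, Complex.mul_conj]
      rw [h2]
      exact ⟨Complex.ofReal_im _, by exact_mod_cast Complex.normSq_pos.mpr hψv⟩
    · rw [spanConj σ σQ hσQ (I * I), mapMul σ σQ hσQ,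
        mul_mul_mul_comm I I _ _, hIcon, Submodule.span_mul_span,
        Set.singleton_mul_singleton]
      have h2 : Submodule.span A ({(↑v : A ⊗[ℤ] ℚ)} : Set (A ⊗[ℤ] ℚ)) *
          Submodule.span A {σQ ↑v} =
          Submodule.span A ({(↑v : A ⊗[ℤ] ℚ)} : Set (A ⊗[ℤ] ℚ)) *
          Submodule.span A {(↑v : A ⊗[ℤ] ℚ)} := by rw [hσvspan]
      rw [Submodule.span_mul_span, Submodule.span_mul_span,
        Set.singleton_mul_singleton, Set.singleton_mul_singleton] at h2
      exact h2.symm
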